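/- arXiv:1910.04499 — 2 statements merged into one kernel-verified Lean document; each statement's English description precedes it below -/
import Mathlib

section
/- (GCN information preservation) Suppose y^{(l)} = P^{(l)}(W^{(l)} ⊗ A) ⋯ P^{(1)}(W^{(1)} ⊗ A) x, where each P^{(i)} is diagonal with entries in {a, 1}, a ∈ (0,1). Let γ_A = min_j λ_j(A) and γ_W = inf_i min_j λ_j(W^{(i)}). If a γ_A γ_W ≥ 1, then for every l the matrix P^{(l)}(W^{(l)} ⊗ A) ⋯ P^{(1)}(W^{(1)} ⊗ A) is invertible; consequently, for discrete x, I(x; y^{(l)}) = H(x) and the information loss H(x | y^{(l)}) = 0. -/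
open Matrix
open scoped Kronecker
open MeasureTheory

/-- Shannon entropy of a discrete random element `X` under the measure `μ`. -/
noncomputable def entropy {Ω : Type*} [MeasurableSpace Ω] (μ : Measure Ω)
    {S : Type*} (X : Ω → S) : ℝ :=
  ∑' s : S, Real.negMulLog (μ (X ⁻¹' {s})).toReal

/-- Mutual information `I(X; Y) = H(X) + H(Y) - H(X, Y)`. -/
noncomputable def mutualInfo {Ω : Type*} [MeasurableSpace Ω] (μ : Measure Ω)
    {S T : Type*} (X : Ω → S) (Y : Ω → T) : ℝ :=
  entropy μ X + entropy μ Y - entropy μ (fun ω => (X ω, Y ω))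

/-- Conditional entropy `H(X | Y) = H(X, Y) - H(Y)`. -/
noncomputable def condEntropy {Ω : Type*} [MeasurableSpace Ω] (μ : Measure Ω)
    {S T : Type*} (X : Ω → S) (Y : Ω → T) : ℝ :=
  entropy μ (fun ω => (X ω, Y ω)) - entropy μ Y

/-- Singular values of a real square matrix: square roots of the eigenvalues of `Mᵀ M`. -/
noncomputable def singularValues {m : Type*} [Fintype m] [DecidableEq m]
    (M : Matrix m m ℝ) : m → ℝ :=
  fun i => Real.sqrt ((Matrix.isHermitian_conjTranspose_mul_self M).eigenvalues i)

/-- `chain f l = f l * ⋯ * f 2 * f 1` (and `chain f 0 = 1`). -/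
def chain {m : Type*} [Fintype m] [DecidableEq m]
    (f : ℕ → Matrix m m ℝ) : ℕ → Matrix m m ℝ
  | 0 => 1
  | l + 1 => f (l + 1) * chain f l


private lemma entropy_comp_injective' {Ω S T : Type*} [MeasurableSpace Ω] (μ : Measure Ω)
    (X : Ω → S) (e : S → T) (he : Function.Injective e) :
    entropy μ (fun ω => e (X ω)) = entropy μ X := by
  have key : ∀ s, (fun ω => e (X ω)) ⁻¹' {e s} = X ⁻¹' {s} := by
    intro s; ext ω; simp [he.eq_iff]
  have hsupp : Function.support
      (fun t => Real.negMulLog (μ ((fun ω => e (X ω)) ⁻¹' {t})).toReal) ⊆ Set.range e := by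
    intro t ht
    by_contra hr
    have hemp : (fun ω => e (X ω)) ⁻¹' {t} = ∅ := by
      ext ω
      simp only [Set.mem_preimage, Set.mem_singleton_iff, Set.mem_empty_iff_false, iff_false]
      exact fun h' => hr ⟨X ω, h'⟩
    simp [Function.mem_support, hemp, Real.negMulLog_zero] at ht
  calc entropy μ (fun ω => e (X ω))
      = ∑' s, Real.negMulLog (μ ((fun ω => e (X ω)) ⁻¹' {e s})).toReal :=
        (he.tsum_eq hsupp).symm
    _ = entropy μ X := tsum_congr fun s => by rw [key s]

private lemma isUnit_of_pos_singularValues' {m : Type*} [Fintype m] [DecidableEq m]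
    (M : Matrix m m ℝ) (h : ∀ j, 0 < singularValues M j) : IsUnit M := by
  have hev : ∀ j, 0 < (Matrix.isHermitian_conjTranspose_mul_self M).eigenvalues j :=
    fun j => Real.sqrt_pos.mp (h j)
  have hdet : 0 < (Mᴴ * M).det := by
    rw [(Matrix.isHermitian_conjTranspose_mul_self M).det_eq_prod_eigenvalues]
    exact Finset.prod_pos fun j _ => hev j
  rw [Matrix.isUnit_iff_isUnit_det, isUnit_iff_ne_zero]
  intro h0
  rw [Matrix.det_mul, Matrix.det_conjTranspose, h0, star_zero, zero_mul] at hdet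
  exact lt_irrefl _ hdet

/-- (GCN information preservation) If `y^{(l)} = P^{(l)}(W^{(l)} ⊗ A) ⋯ P^{(1)}(W^{(1)} ⊗ A) x`
with each `P^{(i)}` diagonal with entries in `{a, 1}`, `a ∈ (0,1)`, and
`a · γ_A · γ_W ≥ 1` where `γ_A = min_j λ_j(A)` and `γ_W = inf_i min_j λ_j(W^{(i)})`, then
each total map is invertible; consequently `I(x; y^{(l)}) = H(x)` and `H(x | y^{(l)}) = 0`. -/
theorem gcn_information_preservation {Ω : Type*} [MeasurableSpace Ω] (μ : Measure Ω)
    [IsProbabilityMeasure μ] {n d : ℕ} (a : ℝ) (ha : a ∈ Set.Ioo (0 : ℝ) 1)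
    (A : Matrix (Fin n) (Fin n) ℝ) (W : ℕ → Matrix (Fin d) (Fin d) ℝ)
    (P : ℕ → Matrix (Fin d × Fin n) (Fin d × Fin n) ℝ)
    (hP : ∀ i, (P i).IsDiag ∧ ∀ p, P i p p = a ∨ P i p p = 1)
    (h : 1 ≤ a * (⨅ j, singularValues A j) * (⨅ i, ⨅ j, singularValues (W i) j))
    (X : Ω → (Fin d × Fin n → ℝ)) (hXfin : (Set.range X).Finite)
    (hXmeas : ∀ v : Fin d × Fin n → ℝ, MeasurableSet (X ⁻¹' {v})) :
    ∀ l : ℕ,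
      IsUnit (chain (fun i => P i * ((W i) ⊗ₖ A)) l) ∧
      mutualInfo μ X (fun ω => (chain (fun i => P i * ((W i) ⊗ₖ A)) l).mulVec (X ω)) =
        entropy μ X ∧
      condEntropy μ X (fun ω => (chain (fun i => P i * ((W i) ⊗ₖ A)) l).mulVec (X ω)) = 0 := by
  obtain ⟨ha0, -⟩ := ha
  set γA := ⨅ j, singularValues A j with hγAdef
  set γW := ⨅ i, ⨅ j, singularValues (W i) j with hγWdef
  have hγA0 : 0 ≤ γA := Real.iInf_nonneg fun j => Real.sqrt_nonneg _
  have hγW0 : 0 ≤ γW := Real.iInf_nonneg fun i => Real.iInf_nonneg fun j => Real.sqrt_nonneg _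
  have hγA : 0 < γA := by
    rcases hγA0.lt_or_eq with h' | h'
    · exact h'
    · rw [← h', mul_zero, zero_mul] at h; linarith
  have hγW : 0 < γW := by
    rcases hγW0.lt_or_eq with h' | h'
    · exact h'
    · rw [← h', mul_zero] at h; linarith
  have bddA : BddBelow (Set.range fun j => singularValues A j) := by
    refine ⟨0, ?_⟩; rintro x ⟨j, rfl⟩; exact Real.sqrt_nonneg _
  have hAunit : IsUnit A := by
    refine isUnit_of_pos_singularValues' A fun j => lt_of_lt_of_le hγA ?_
    exact ciInf_le bddA j
  have hWunit : ∀ i, IsUnit (W i) := by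
    intro i
    refine isUnit_of_pos_singularValues' (W i) fun j => lt_of_lt_of_le hγW ?_
    have h1 : γW ≤ ⨅ j, singularValues (W i) j := by
      refine ciInf_le ⟨0, ?_⟩ i
      rintro x ⟨k, rfl⟩
      exact Real.iInf_nonneg fun j => Real.sqrt_nonneg _
    have h2 : (⨅ j, singularValues (W i) j) ≤ singularValues (W i) j := by
      refine ciInf_le ⟨0, ?_⟩ j
      rintro x ⟨k, rfl⟩; exact Real.sqrt_nonneg _
    exact h1.trans h2
  have hPunit : ∀ i, IsUnit (P i) := by
    intro i
    rw [Matrix.isUnit_iff_isUnit_det, ← (hP i).1.diagonal_diag, Matrix.det_diagonal,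
      isUnit_iff_ne_zero]
    refine Finset.prod_ne_zero_iff.mpr fun p _ => ?_
    rcases (hP i).2 p with hp | hp <;> simp [Matrix.diag, hp] <;> exact ne_of_gt ha0
  have hKunit : ∀ i, IsUnit ((W i) ⊗ₖ A) := by
    intro i
    rw [Matrix.isUnit_iff_isUnit_det, Matrix.det_kronecker]
    exact (((Matrix.isUnit_iff_isUnit_det _).mp (hWunit i)).pow _).mul
      (((Matrix.isUnit_iff_isUnit_det _).mp hAunit).pow _)
  have hchain : ∀ l, IsUnit (chain (fun i => P i * ((W i) ⊗ₖ A)) l) := by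
    intro l
    induction l with
    | zero => exact isUnit_one
    | succ l ih => exact ((hPunit _).mul (hKunit _)).mul ih
  intro l
  have hM := hchain l
  set M := chain (fun i => P i * ((W i) ⊗ₖ A)) l with hMdef
  have hinj : Function.Injective M.mulVec := Matrix.mulVec_injective_iff_isUnit.mpr hM
  have HY : entropy μ (fun ω => M.mulVec (X ω)) = entropy μ X :=
    entropy_comp_injective' μ X _ hinj
  have HXY : entropy μ (fun ω => (X ω, M.mulVec (X ω))) = entropy μ X :=
    entropy_comp_injective' μ X (fun v => (v, M.mulVec v))
      (fun u v huv => congrArg Prod.fst huv)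
  refine ⟨hM, ?_, ?_⟩
  · simp only [mutualInfo]
    rw [HY, HXY]; ring
  · simp only [condEntropy]
    rw [HY, HXY]; ring
end

section
/- Let A ∈ ℝ^{n×n} with SVD-based decomposition A_k = U_A S_k V_Aᵀ as above, and weight matrices W_k^{(i)} ∈ ℝ^{d×d}. Set σ_{A_k} = λ_k(A) and σ_{W_k} = sup_i max_j λ_j(W_k^{(i)}). If σ_{A_k} σ_{W_k} < 1 for every k ∈ {1,...,n}, then the largest singular value of Σ_k W_k^{(i)} ⊗ A_k is at most max_k σ_{A_k} σ_{W_k} < 1, and hence the operator norm of any l-fold product P^{(l)} (Σ_{k} W_k^{(l)} ⊗ A_k) ⋯ P^{(1)} (Σ_k W_k^{(1)} ⊗ A_k), with each P^{(i)} diagonal having entries in (0,1], tends to 0 as l → ∞. -/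
open Matrix
open scoped Kronecker

/-- The `k`-th rank-one SVD component `A_k = U S_k Vᵀ`, where `S_k` keeps only the `k`-th
singular value of `S = diag σ`. -/
noncomputable def svdPart {n : ℕ} (U V : Matrix (Fin n) (Fin n) ℝ) (σ : Fin n → ℝ)
    (k : Fin n) : Matrix (Fin n) (Fin n) ℝ :=
  U * Matrix.diagonal (fun m => if m = k then σ k else 0) * Vᵀ

namespace DGNaux

open scoped Matrix.Norms.L2Operator

lemma le_of_sq_le_sq {a b : ℝ} (ha : 0 ≤ a) (hb : 0 ≤ b) (h : a^2 ≤ b^2) : a ≤ b := by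
  nlinarith

lemma norm_le_of_mulVec {m' m : Type*} [Fintype m] [DecidableEq m] [Fintype m']
    (A : Matrix m' m ℝ) {c : ℝ} (hc : 0 ≤ c)
    (h : ∀ x : EuclideanSpace ℝ m, ‖(EuclideanSpace.equiv m' ℝ).symm (A *ᵥ x)‖ ≤ c * ‖x‖) :
    ‖A‖ ≤ c := by
  rw [Matrix.l2_opNorm_def]
  exact ContinuousLinearMap.opNorm_le_bound _ hc (fun x => h x)

lemma eunorm_sq {ι : Type*} [Fintype ι] (y : ι → ℝ) :
    ‖(EuclideanSpace.equiv ι ℝ).symm y‖ ^ 2 = ∑ i, y i ^ 2 := by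
  rw [EuclideanSpace.norm_eq, Real.sq_sqrt (by positivity)]
  simp [Real.norm_eq_abs, sq_abs]

lemma norm_one_le {m : Type*} [Fintype m] [DecidableEq m] :
    ‖(1 : Matrix m m ℝ)‖ ≤ 1 := by
  apply norm_le_of_mulVec _ zero_le_one
  intro x
  rw [Matrix.one_mulVec, one_mul]
  rfl

lemma norm_unitary {m : Type*} [Fintype m] [DecidableEq m] (Q : Matrix m m ℝ)
    (h : Qᵀ * Q = 1) : ‖Q‖ ≤ 1 := by
  apply norm_le_of_mulVec Q zero_le_one
  intro x
  rw [one_mul]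
  apply le_of_sq_le_sq (norm_nonneg _) (norm_nonneg _)
  rw [eunorm_sq]
  have hx : ‖x‖ ^ 2 = ∑ i, (x : m → ℝ) i ^ 2 := by
    rw [EuclideanSpace.norm_eq, Real.sq_sqrt (by positivity)]
    simp [Real.norm_eq_abs, sq_abs]
  rw [hx]
  have key : (Q *ᵥ (x : m → ℝ)) ⬝ᵥ (Q *ᵥ (x : m → ℝ)) = (x : m → ℝ) ⬝ᵥ (x : m → ℝ) := by
    rw [dotProduct_mulVec, ← Matrix.mulVec_transpose, Matrix.mulVec_mulVec, h,
      Matrix.one_mulVec]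
  simpa [dotProduct, pow_two] using key.le

lemma norm_diagonal_le {m : Type*} [Fintype m] [DecidableEq m] (v : m → ℝ) {c : ℝ}
    (hc : 0 ≤ c) (h : ∀ i, |v i| ≤ c) : ‖Matrix.diagonal v‖ ≤ c := by
  apply norm_le_of_mulVec _ hc
  intro x
  apply le_of_sq_le_sq (norm_nonneg _) (by positivity)
  rw [eunorm_sq, mul_pow]
  have hx : ‖x‖ ^ 2 = ∑ i, (x : m → ℝ) i ^ 2 := by
    rw [EuclideanSpace.norm_eq, Real.sq_sqrt (by positivity)]
    simp [Real.norm_eq_abs, sq_abs]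
  rw [hx, Finset.mul_sum]
  apply Finset.sum_le_sum
  intro i _
  rw [Matrix.mulVec_diagonal, mul_pow]
  have h1 := h i
  have h2 : v i ^ 2 ≤ c ^ 2 := by nlinarith [sq_abs (v i), abs_nonneg (v i)]
  nlinarith [sq_nonneg ((x : m → ℝ) i)]

variable {m : Type*} [Fintype m] [DecidableEq m]

lemma sv_nonneg (M : Matrix m m ℝ) (p : m) : 0 ≤ singularValues M p := Real.sqrt_nonneg _

lemma eig_nonneg (M : Matrix m m ℝ) (p : m) :
    0 ≤ (Matrix.isHermitian_conjTranspose_mul_self M).eigenvalues p :=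
  (Matrix.posSemidef_conjTranspose_mul_self M).eigenvalues_nonneg p

lemma sv_le_norm (M : Matrix m m ℝ) (p : m) : singularValues M p ≤ ‖M‖ := by
  set hH := Matrix.isHermitian_conjTranspose_mul_self M with hHdef
  set v : EuclideanSpace ℝ m := hH.eigenvectorBasis p with hv
  have hv1 : ‖v‖ = 1 := hH.eigenvectorBasis.orthonormal.1 p
  have hev : (Mᵀ * M) *ᵥ ⇑(hH.eigenvectorBasis p) =
      hH.eigenvalues p • ⇑(hH.eigenvectorBasis p) := hH.mulVec_eigenvectorBasis p
  have h1 : ‖(EuclideanSpace.equiv m ℝ).symm ((Mᵀ * M) *ᵥ v)‖ ≤ ‖Mᵀ * M‖ * ‖v‖ :=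
    Matrix.l2_opNorm_mulVec (Mᵀ * M) v
  have h2 : (EuclideanSpace.equiv m ℝ).symm ((Mᵀ * M) *ᵥ (v : m → ℝ)) =
      hH.eigenvalues p • v := by
    apply (EuclideanSpace.equiv m ℝ).injective
    ext i
    have := congrFun hev i
    simpa [hv] using this
  rw [h2, norm_smul, hv1, Real.norm_eq_abs, mul_one, mul_one,
    abs_of_nonneg (eig_nonneg M p)] at h1
  have h3 : ‖Mᵀ * M‖ = ‖M‖ * ‖M‖ := by
    rw [← Matrix.conjTranspose_eq_transpose_of_trivial]
    exact Matrix.l2_opNorm_conjTranspose_mul_self M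
  calc singularValues M p = Real.sqrt (hH.eigenvalues p) := rfl
    _ ≤ Real.sqrt (‖M‖ * ‖M‖) := Real.sqrt_le_sqrt (h3 ▸ h1)
    _ = ‖M‖ := Real.sqrt_mul_self (norm_nonneg M)

lemma sup_sv_le_norm (M : Matrix m m ℝ) : (⨆ p, singularValues M p) ≤ ‖M‖ :=
  Real.iSup_le (fun p => sv_le_norm M p) (norm_nonneg M)

lemma norm_le_sup_sv (M : Matrix m m ℝ) : ‖M‖ ≤ ⨆ j, singularValues M j := by
  cases isEmpty_or_nonempty m with
  | inl hempty =>
    have hM : M = 0 := by ext i j; exact isEmptyElim i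
    rw [hM, norm_zero, Real.iSup_of_isEmpty]
  | inr hne =>
    set t := ⨆ j, singularValues M j with ht
    have ht0 : 0 ≤ t := Real.iSup_nonneg (fun j => sv_nonneg M j)
    set hH := Matrix.isHermitian_conjTranspose_mul_self M with hHdef
    have hspec := hH.spectral_theorem
    have hdiag : Matrix.diagonal ((RCLike.ofReal : ℝ → ℝ) ∘ hH.eigenvalues) =
        Matrix.diagonal hH.eigenvalues := by
      congr 1
    set Q : Matrix m m ℝ := (Matrix.IsHermitian.eigenvectorUnitary hH : Matrix m m ℝ) with hQ
    have hQ1 : Qᵀ * Q = 1 := by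
      rw [← Matrix.conjTranspose_eq_transpose_of_trivial]
      exact Matrix.mem_unitaryGroup_iff'.mp (Matrix.IsHermitian.eigenvectorUnitary hH).property
    have hQ2 : (Qᵀ)ᵀ * Qᵀ = 1 := by
      rw [Matrix.transpose_transpose, ← Matrix.conjTranspose_eq_transpose_of_trivial]
      exact Matrix.mem_unitaryGroup_iff.mp (Matrix.IsHermitian.eigenvectorUnitary hH).property
    have hstar : star Q = Qᵀ := Matrix.conjTranspose_eq_transpose_of_trivial Q
    have hDle : ‖Matrix.diagonal hH.eigenvalues‖ ≤ t ^ 2 := by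
      apply norm_diagonal_le _ (by positivity)
      intro j
      have h0 := (Matrix.posSemidef_conjTranspose_mul_self M).eigenvalues_nonneg j
      rw [abs_of_nonneg h0]
      have heq : hH.eigenvalues j = singularValues M j ^ 2 := by
        rw [show singularValues M j = Real.sqrt (hH.eigenvalues j) from rfl,
          Real.sq_sqrt h0]
      rw [heq]
      have hle : singularValues M j ≤ t :=
        le_ciSup (Set.Finite.bddAbove (Set.finite_range _)) j
      exact pow_le_pow_left₀ (sv_nonneg M j) hle 2
    have hkey : ‖Mᵀ * M‖ ≤ t ^ 2 := by
      rw [show Mᵀ * M = Q * Matrix.diagonal hH.eigenvalues * Qᵀ by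
        rw [← hstar, ← hdiag]; exact hspec]
      calc ‖Q * Matrix.diagonal hH.eigenvalues * Qᵀ‖
          ≤ ‖Q * Matrix.diagonal hH.eigenvalues‖ * ‖Qᵀ‖ := Matrix.l2_opNorm_mul _ _
        _ ≤ (‖Q‖ * ‖Matrix.diagonal hH.eigenvalues‖) * ‖Qᵀ‖ := by
            apply mul_le_mul_of_nonneg_right (Matrix.l2_opNorm_mul _ _) (norm_nonneg _)
        _ ≤ (1 * (t ^ 2)) * 1 := by
            apply mul_le_mul _ (norm_unitary _ hQ2) (norm_nonneg _) (by positivity)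
            exact mul_le_mul (norm_unitary _ hQ1) hDle (norm_nonneg _) zero_le_one
        _ = t ^ 2 := by ring
    apply le_of_sq_le_sq (norm_nonneg M) ht0
    calc ‖M‖ ^ 2 = ‖M‖ * ‖M‖ := sq ‖M‖
      _ = ‖Mᴴ * M‖ := (Matrix.l2_opNorm_conjTranspose_mul_self M).symm
      _ = ‖Mᵀ * M‖ := by rw [Matrix.conjTranspose_eq_transpose_of_trivial]
      _ ≤ t ^ 2 := hkey

lemma block_entry {n d : ℕ} (Wk : Fin n → Matrix (Fin d) (Fin d) ℝ) (σ : Fin n → ℝ)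
    (p q : Fin d) (a b : Fin n) :
    (∑ k, Wk k ⊗ₖ Matrix.diagonal (fun m => if m = k then σ k else 0)) (p, a) (q, b) =
      if a = b then σ a * Wk a p q else 0 := by
  simp only [Matrix.sum_apply, Matrix.kroneckerMap_apply, Matrix.diagonal_apply]
  by_cases hab : a = b
  · subst hab
    simp [Finset.sum_ite_eq, mul_comm]
  · simp [hab]

lemma block_mulVec {n d : ℕ} (Wk : Fin n → Matrix (Fin d) (Fin d) ℝ) (σ : Fin n → ℝ)
    (v : Fin d × Fin n → ℝ) (p : Fin d) (a : Fin n) :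
    ((∑ k, Wk k ⊗ₖ Matrix.diagonal (fun m => if m = k then σ k else 0)) *ᵥ v) (p, a) =
      σ a * ((Wk a *ᵥ fun q => v (q, a)) p) := by
  rw [Matrix.mulVec, dotProduct]
  rw [Fintype.sum_prod_type]
  simp only [block_entry]
  rw [Finset.sum_comm]
  have hy : ∀ y : Fin n, (∑ x : Fin d, (if a = y then σ a * Wk a p x else 0) * v (x, y))
      = if y = a then σ a * ∑ x : Fin d, Wk a p x * v (x, a) else 0 := by
    intro y
    by_cases hyy : y = a
    · subst hyy; simp [Finset.mul_sum, mul_assoc]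
    · simp [Ne.symm hyy, hyy]
  rw [Finset.sum_congr rfl (fun y _ => hy y), Finset.sum_ite_eq' Finset.univ a]
  simp [Matrix.mulVec, dotProduct]

lemma block_norm_le {n d : ℕ} (Wk : Fin n → Matrix (Fin d) (Fin d) ℝ) (σ : Fin n → ℝ)
    (hσ : ∀ k, 0 ≤ σ k) {c : ℝ} (hc : 0 ≤ c) (h : ∀ k, σ k * ‖Wk k‖ ≤ c) :
    ‖∑ k, Wk k ⊗ₖ Matrix.diagonal (fun m => if m = k then σ k else 0)‖ ≤ c := by
  apply norm_le_of_mulVec _ hc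
  intro x
  apply le_of_sq_le_sq (norm_nonneg _) (by positivity)
  rw [eunorm_sq, mul_pow]
  have hx : ‖x‖ ^ 2 = ∑ i, (x : Fin d × Fin n → ℝ) i ^ 2 := by
    rw [EuclideanSpace.norm_eq, Real.sq_sqrt (by positivity)]
    simp [Real.norm_eq_abs, sq_abs]
  rw [hx]
  rw [Fintype.sum_prod_type, Finset.sum_comm]
  rw [show (∑ i : Fin d × Fin n, (x : Fin d × Fin n → ℝ) i ^ 2)
      = ∑ a : Fin n, ∑ q : Fin d, (x : Fin d × Fin n → ℝ) (q, a) ^ 2 by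
    rw [Fintype.sum_prod_type, Finset.sum_comm]]
  rw [Finset.mul_sum]
  apply Finset.sum_le_sum
  intro a _
  set va : EuclideanSpace ℝ (Fin d) :=
    (EuclideanSpace.equiv (Fin d) ℝ).symm (fun q => (x : Fin d × Fin n → ℝ) (q, a)) with hva
  have hWa : ‖(EuclideanSpace.equiv (Fin d) ℝ).symm (Wk a *ᵥ va)‖ ≤ ‖Wk a‖ * ‖va‖ :=
    Matrix.l2_opNorm_mulVec (Wk a) va
  have hvanorm : ‖va‖ ^ 2 = ∑ q, (x : Fin d × Fin n → ℝ) (q, a) ^ 2 := eunorm_sq _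
  have hsq : ∑ p, ((∑ k, Wk k ⊗ₖ Matrix.diagonal (fun m => if m = k then σ k else 0)) *ᵥ
        (x : Fin d × Fin n → ℝ)) (p, a) ^ 2
      = σ a ^ 2 * ‖(EuclideanSpace.equiv (Fin d) ℝ).symm (Wk a *ᵥ va)‖ ^ 2 := by
    rw [eunorm_sq, Finset.mul_sum]
    apply Finset.sum_congr rfl
    intro p _
    rw [block_mulVec, mul_pow]
    rfl
  rw [hsq]
  have h1 : σ a * ‖(EuclideanSpace.equiv (Fin d) ℝ).symm (Wk a *ᵥ va)‖ ≤ c * ‖va‖ := by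
    calc σ a * ‖(EuclideanSpace.equiv (Fin d) ℝ).symm (Wk a *ᵥ va)‖
        ≤ σ a * (‖Wk a‖ * ‖va‖) := mul_le_mul_of_nonneg_left hWa (hσ a)
      _ = (σ a * ‖Wk a‖) * ‖va‖ := by ring
      _ ≤ c * ‖va‖ := mul_le_mul_of_nonneg_right (h a) (norm_nonneg _)
  have h2 : (σ a * ‖(EuclideanSpace.equiv (Fin d) ℝ).symm (Wk a *ᵥ va)‖) ^ 2
      ≤ (c * ‖va‖) ^ 2 :=
    pow_le_pow_left₀ (mul_nonneg (hσ a) (norm_nonneg _)) h1 2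
  calc σ a ^ 2 * ‖(EuclideanSpace.equiv (Fin d) ℝ).symm (Wk a *ᵥ va)‖ ^ 2
      = (σ a * ‖(EuclideanSpace.equiv (Fin d) ℝ).symm (Wk a *ᵥ va)‖) ^ 2 := by ring
    _ ≤ (c * ‖va‖) ^ 2 := h2
    _ = c ^ 2 * ‖va‖ ^ 2 := by ring
    _ = c ^ 2 * ∑ q, (x : Fin d × Fin n → ℝ) (q, a) ^ 2 := by rw [hvanorm]

lemma decomp {n d : ℕ} (U V : Matrix (Fin n) (Fin n) ℝ) (σ : Fin n → ℝ)
    (Wk : Fin n → Matrix (Fin d) (Fin d) ℝ) :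
    (∑ k, Wk k ⊗ₖ svdPart U V σ k) =
      ((1 : Matrix (Fin d) (Fin d) ℝ) ⊗ₖ U) *
        (∑ k, Wk k ⊗ₖ Matrix.diagonal (fun m => if m = k then σ k else 0)) *
        ((1 : Matrix (Fin d) (Fin d) ℝ) ⊗ₖ Vᵀ) := by
  rw [Finset.mul_sum, Finset.sum_mul]
  apply Finset.sum_congr rfl
  intro k _
  rw [svdPart, ← Matrix.mul_kronecker_mul, ← Matrix.mul_kronecker_mul]
  simp [Matrix.mul_assoc]

lemma norm_main_le {n d : ℕ} (U V : Matrix (Fin n) (Fin n) ℝ)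
    (hU : Uᵀ * U = 1) (hV : V * Vᵀ = 1) (σ : Fin n → ℝ) (hσ : ∀ k, 0 ≤ σ k)
    (Wk : Fin n → Matrix (Fin d) (Fin d) ℝ) {c : ℝ} (hc : 0 ≤ c)
    (h : ∀ k, σ k * ‖Wk k‖ ≤ c) :
    ‖∑ k, Wk k ⊗ₖ svdPart U V σ k‖ ≤ c := by
  rw [decomp]
  have hUle : ‖(1 : Matrix (Fin d) (Fin d) ℝ) ⊗ₖ U‖ ≤ 1 := by
    apply norm_unitary
    rw [← Matrix.kroneckerMap_transpose, ← Matrix.mul_kronecker_mul, Matrix.transpose_one,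
      one_mul, hU, Matrix.one_kronecker_one]
  have hVle : ‖(1 : Matrix (Fin d) (Fin d) ℝ) ⊗ₖ Vᵀ‖ ≤ 1 := by
    apply norm_unitary
    rw [← Matrix.kroneckerMap_transpose, ← Matrix.mul_kronecker_mul, Matrix.transpose_one,
      one_mul, Matrix.transpose_transpose, hV, Matrix.one_kronecker_one]
  have hB := block_norm_le Wk σ hσ hc h
  calc ‖((1 : Matrix (Fin d) (Fin d) ℝ) ⊗ₖ U) *
        (∑ k, Wk k ⊗ₖ Matrix.diagonal (fun m => if m = k then σ k else 0)) *
        ((1 : Matrix (Fin d) (Fin d) ℝ) ⊗ₖ Vᵀ)‖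
      ≤ ‖((1 : Matrix (Fin d) (Fin d) ℝ) ⊗ₖ U) *
        (∑ k, Wk k ⊗ₖ Matrix.diagonal (fun m => if m = k then σ k else 0))‖ *
        ‖(1 : Matrix (Fin d) (Fin d) ℝ) ⊗ₖ Vᵀ‖ := Matrix.l2_opNorm_mul _ _
    _ ≤ (‖(1 : Matrix (Fin d) (Fin d) ℝ) ⊗ₖ U‖ *
        ‖∑ k, Wk k ⊗ₖ Matrix.diagonal (fun m => if m = k then σ k else 0)‖) *
        ‖(1 : Matrix (Fin d) (Fin d) ℝ) ⊗ₖ Vᵀ‖ :=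
        mul_le_mul_of_nonneg_right (Matrix.l2_opNorm_mul _ _) (norm_nonneg _)
    _ ≤ (1 * c) * 1 := by
        apply mul_le_mul _ hVle (norm_nonneg _) (by positivity)
        exact mul_le_mul hUle hB (norm_nonneg _) zero_le_one
    _ = c := by ring

end DGNaux

open scoped Matrix.Norms.L2Operator in
/-- If `σ_{A_k} σ_{W_k} < 1` for every `k` (with `σ_{A_k} = λ_k(A)` and
`σ_{W_k} = sup_i max_j λ_j(W_k^{(i)})`), then the largest singular value of every
`Σ_k W_k^{(i)} ⊗ A_k` is at most `max_k σ_{A_k} σ_{W_k} < 1`, and the operator norm of the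
`l`-fold product `P^{(l)} (Σ_k W_k^{(l)} ⊗ A_k) ⋯ P^{(1)} (Σ_k W_k^{(1)} ⊗ A_k)`, with each
`P^{(i)}` diagonal with entries in `(0,1]`, tends to 0 as `l → ∞`. -/
theorem decomposed_gcn_norm_tendsto_zero {n d : ℕ} (hn : 0 < n)
    (U V : Matrix (Fin n) (Fin n) ℝ)
    (hU : Uᵀ * U = 1 ∧ U * Uᵀ = 1) (hV : Vᵀ * V = 1 ∧ V * Vᵀ = 1)
    (σ : Fin n → ℝ) (hσ : ∀ k, 0 ≤ σ k)
    (W : ℕ → Fin n → Matrix (Fin d) (Fin d) ℝ)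
    (hbdd : ∀ k, BddAbove (Set.range fun i => ⨆ j, singularValues (W i k) j))
    (hlt : ∀ k, σ k * (⨆ i, ⨆ j, singularValues (W i k) j) < 1)
    (P : ℕ → Matrix (Fin d × Fin n) (Fin d × Fin n) ℝ)
    (hP : ∀ i, (P i).IsDiag ∧ ∀ p, P i p p ∈ Set.Ioc (0 : ℝ) 1) :
    (∀ i, (⨆ p, singularValues (∑ k, (W i k) ⊗ₖ svdPart U V σ k) p) ≤
        ⨆ k, σ k * (⨆ i', ⨆ j, singularValues (W i' k) j)) ∧
    (⨆ k, σ k * (⨆ i', ⨆ j, singularValues (W i' k) j)) < 1 ∧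
    Filter.Tendsto
      (fun l => ⨆ p,
        singularValues (chain (fun i => P i * ∑ k, (W i k) ⊗ₖ svdPart U V σ k) l) p)
      Filter.atTop (nhds 0) := by
  classical
  haveI : Nonempty (Fin n) := ⟨⟨0, hn⟩⟩
  set s : Fin n → ℝ := fun k => ⨆ i', ⨆ j, singularValues (W i' k) j with hs
  set c : ℝ := ⨆ k, σ k * s k with hc
  have hs0 : ∀ k, 0 ≤ s k := fun k =>
    Real.iSup_nonneg fun i => Real.iSup_nonneg fun j => DGNaux.sv_nonneg _ _
  have hc0 : 0 ≤ c := Real.iSup_nonneg fun k => mul_nonneg (hσ k) (hs0 k)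
  have hWle : ∀ i k, ‖W i k‖ ≤ s k := fun i k =>
    (DGNaux.norm_le_sup_sv _).trans (le_ciSup (hbdd k) i)
  have hWc : ∀ i k, σ k * ‖W i k‖ ≤ c := fun i k =>
    le_trans (mul_le_mul_of_nonneg_left (hWle i k) (hσ k))
      (le_ciSup (f := fun k => σ k * s k) (Set.Finite.bddAbove (Set.finite_range _)) k)
  have hM : ∀ i, ‖∑ k, W i k ⊗ₖ svdPart U V σ k‖ ≤ c := fun i =>
    DGNaux.norm_main_le U V hU.1 hV.2 σ hσ (W i) hc0 (hWc i)
  have hclt : c < 1 := by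
    obtain ⟨k0, hk0⟩ := Finite.exists_max (fun k => σ k * s k)
    exact lt_of_le_of_lt (ciSup_le fun k => hk0 k) (hlt k0)
  refine ⟨fun i => (DGNaux.sup_sv_le_norm _).trans (hM i), hclt, ?_⟩
  have hP1 : ∀ i, ‖P i‖ ≤ 1 := by
    intro i
    rw [← (hP i).1.diagonal_diag]
    apply DGNaux.norm_diagonal_le _ zero_le_one
    intro p
    have h2 := (hP i).2 p
    rw [Matrix.diag_apply]
    exact abs_le.mpr ⟨by linarith [h2.1], h2.2⟩
  have hchain : ∀ l, ‖chain (fun i => P i * ∑ k, (W i k) ⊗ₖ svdPart U V σ k) l‖ ≤ c ^ l := by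
    intro l
    induction l with
    | zero => simpa [chain] using DGNaux.norm_one_le
    | succ l ih =>
      have hf : ‖P (l + 1) * ∑ k, (W (l + 1) k) ⊗ₖ svdPart U V σ k‖ ≤ c := by
        calc ‖P (l + 1) * ∑ k, (W (l + 1) k) ⊗ₖ svdPart U V σ k‖
            ≤ ‖P (l + 1)‖ * ‖∑ k, (W (l + 1) k) ⊗ₖ svdPart U V σ k‖ :=
              Matrix.l2_opNorm_mul _ _
          _ ≤ 1 * c := mul_le_mul (hP1 _) (hM _) (norm_nonneg _) zero_le_one
          _ = c := one_mul c
      calc ‖chain (fun i => P i * ∑ k, (W i k) ⊗ₖ svdPart U V σ k) (l + 1)‖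
          = ‖(P (l + 1) * ∑ k, (W (l + 1) k) ⊗ₖ svdPart U V σ k) *
              chain (fun i => P i * ∑ k, (W i k) ⊗ₖ svdPart U V σ k) l‖ := rfl
        _ ≤ ‖P (l + 1) * ∑ k, (W (l + 1) k) ⊗ₖ svdPart U V σ k‖ *
              ‖chain (fun i => P i * ∑ k, (W i k) ⊗ₖ svdPart U V σ k) l‖ :=
              Matrix.l2_opNorm_mul _ _
        _ ≤ c * c ^ l := mul_le_mul hf ih (norm_nonneg _) hc0
        _ = c ^ (l + 1) := (pow_succ' c l).symm
  apply squeeze_zero (fun l => Real.iSup_nonneg fun p => DGNaux.sv_nonneg _ _)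
    (fun l => (DGNaux.sup_sv_le_norm _).trans (hchain l))
    (tendsto_pow_atTop_nhds_zero_of_lt_one hc0 hclt)
end
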